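/- arXiv:math/9807118 — 4 statements merged into one kernel-verified Lean document; each statement's English description precedes it below -/
import Mathlib

section
/- Let 𝒱 be a variety of groups with instances of nontrivial dominions. Then there exist a natural number n > 1 and a subgroup H of the relatively free 𝒱-group F_n(𝒱) of rank n such that H is strictly contained in dom_{F_n(𝒱)}^𝒱(H). -/
/-- A bundled group: a type in universe `u` together with a group structure. -/
structure GroupT : Type (u + 1) where
  carrier : Type u
  [str : Group carrier]

attribute [instance] GroupT.str

/-- A variety of groups: a class of groups closed under isomorphism, subgroups,
homomorphic images, and arbitrary direct products indexed by types in the universe. -/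
structure GroupVariety : Type (u + 1) where
  Mem : GroupT.{u} → Prop
  iso_closed : ∀ {G H : GroupT.{u}}, G.carrier ≃* H.carrier → Mem G → Mem H
  subgroup_closed : ∀ (G : GroupT.{u}) (H : Subgroup G.carrier), Mem G → Mem ⟨H⟩
  quotient_closed : ∀ (G H : GroupT.{u}) (f : G.carrier →* H.carrier),
      Function.Surjective f → Mem G → Mem H
  pi_closed : ∀ (ι : Type u) (f : ι → GroupT.{u}),
      (∀ i, Mem (f i)) → Mem ⟨∀ i, (f i).carrier⟩

/-- A variety is nontrivial if it contains some nontrivial group and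
does not contain all groups. -/
def GroupVariety.IsNontrivial (V : GroupVariety.{u}) : Prop :=
  (∃ G : GroupT.{u}, V.Mem G ∧ Nontrivial G.carrier) ∧ ∃ G : GroupT.{u}, ¬ V.Mem G

/-- The dominion of a subgroup `H` of `G` relative to a class `C` of groups:
all elements of `G` on which any two homomorphisms into a `C`-group agreeing on `H`
must agree. -/
def dominion (C : GroupT.{u} → Prop) (G : Type u) [Group G] (H : Subgroup G) : Set G :=
  {a | ∀ K : GroupT.{u}, C K → ∀ f g : G →* K.carrier, (∀ h ∈ H, f h = g h) → f a = g a}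

/-- The product variety `𝒩𝒬`: the class of groups having a normal subgroup in `𝒩`
with quotient in `𝒬`. -/
def ProductVariety (N Q : GroupVariety.{u}) (G : GroupT.{u}) : Prop :=
  ∃ (M : Subgroup G.carrier) (h : M.Normal),
    N.Mem ⟨M⟩ ∧ (letI := h; Q.Mem ⟨G.carrier ⧸ M⟩)

/-- The verbal subgroup `𝒬(G)`: the intersection of all normal subgroups of `G`
whose quotient lies in `𝒬`. -/
def verbalSubgroup (Q : GroupVariety.{u}) (G : Type u) [Group G] : Subgroup G :=
  ⨅ M ∈ {M : Subgroup G | ∃ h : M.Normal, (letI := h; Q.Mem ⟨G ⧸ M⟩)}, M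

/-- A class of groups has instances of nontrivial dominions if there is a group `G`
in the class and a subgroup `H` of `G` strictly contained in its dominion in `G`. -/
def HasNontrivialDominions (C : GroupT.{u} → Prop) : Prop :=
  ∃ (G : GroupT.{u}) (H : Subgroup G.carrier),
    C G ∧ (H : Set G.carrier) ⊂ dominion C G.carrier H

instance verbalSubgroup_normal (Q : GroupVariety.{u}) (G : Type u) [Group G] :
    (verbalSubgroup Q G).Normal := by
  constructor
  intro x hx g
  simp only [verbalSubgroup, Subgroup.mem_iInf] at hx ⊢
  intro M hM
  exact hM.choose.conj_mem x (hx M hM) g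

/-- The relatively free `𝒱`-group on a set `X`: the quotient of the free group on `X`
by the intersection of all normal subgroups with quotient in `𝒱`. -/
def relativelyFree (V : GroupVariety.{u}) (X : Type u) : Type u :=
  FreeGroup X ⧸ verbalSubgroup V (FreeGroup X)

noncomputable instance (V : GroupVariety.{u}) (X : Type u) : Group (relativelyFree V X) :=
  QuotientGroup.Quotient.group _

-- K × K is in the variety
lemma mem_prod_self (𝒱 : GroupVariety.{u}) (K : GroupT.{u}) (hK : 𝒱.Mem K) :
    𝒱.Mem ⟨K.carrier × K.carrier⟩ := by
  have h := 𝒱.pi_closed (ULift.{u} Bool) (fun _ => K) (fun _ => hK)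
  refine 𝒱.iso_closed (G := ⟨∀ _ : ULift.{u} Bool, K.carrier⟩) ?_ h
  exact
    { toFun := fun x => (x ⟨true⟩, x ⟨false⟩)
      invFun := fun p b => if b.down then p.1 else p.2
      left_inv := by
        intro x; funext b; rcases b with ⟨b⟩; cases b <;> simp
      right_inv := by intro p; simp
      map_mul' := by intro x y; simp [Pi.mul_apply, Prod.mk_mul_mk] }

/-- Lifting lemma: if `π : F ↠ G` is surjective and `π a` is in the dominion of `H₀` in `G`,
then `a` is in the dominion of `π⁻¹ H₀` in `F`. -/
lemma dominion_lift (𝒱 : GroupVariety.{u}) {F G : Type u} [Group F] [Group G]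
    (π : F →* G) (hsurj : Function.Surjective π) (H₀ : Subgroup G) (a : F)
    (ha : π a ∈ dominion 𝒱.Mem G H₀) :
    a ∈ dominion 𝒱.Mem F (H₀.comap π) := by
  intro K hK f g hfg
  have hker : ∀ n : F, n ∈ π.ker → f n = g n := by
    intro n hn
    refine hfg n ?_
    rw [MonoidHom.mem_ker] at hn
    rw [Subgroup.mem_comap, hn]
    exact one_mem _
  set M : Subgroup (K.carrier × K.carrier) := Subgroup.map (f.prod g) π.ker with hM
  set L : Subgroup (K.carrier × K.carrier) :=
    (f.prod g).range ⊔ ((f.prod f).range ⊔ (g.prod g).range) with hL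
  have hML : M ≤ L := by
    refine le_trans (Subgroup.map_le_range _ _) ?_
    exact le_sup_left
  -- conjugation stability
  have hconj : ∀ x : F, ∀ u : K.carrier × K.carrier,
      (u = (f x, g x) ∨ u = (f x, f x) ∨ u = (g x, g x)) →
      ∀ m ∈ M, u * m * u⁻¹ ∈ M := by
    intro x u hu m hm
    obtain ⟨n, hn, rfl⟩ := hm
    have hnmem : x * n * x⁻¹ ∈ π.ker := (MonoidHom.normal_ker π).conj_mem n hn x
    have hfg_n : f n = g n := hker n hn
    have hfg_n' : f (x * n * x⁻¹) = g (x * n * x⁻¹) := hker _ hnmem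
    refine ⟨x * n * x⁻¹, hnmem, ?_⟩
    rcases hu with rfl | rfl | rfl
    · ext
      · simp [map_mul, map_inv, mul_assoc]
      · simp [map_mul, map_inv, mul_assoc]
    · ext
      · simp [map_mul, map_inv, mul_assoc]
      · show g (x * n * x⁻¹) = f x * g n * (f x)⁻¹
        rw [← hfg_n', ← hfg_n]
        simp [map_mul, map_inv, mul_assoc]
    · ext
      · show f (x * n * x⁻¹) = g x * f n * (g x)⁻¹
        rw [hfg_n', hfg_n]
        simp [map_mul, map_inv, mul_assoc]
      · simp [map_mul, map_inv, mul_assoc]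
  have hnormalizer : L ≤ Subgroup.normalizer (M : Set (K.carrier × K.carrier)) := by
    have hgen : ∀ x : F, ∀ u : K.carrier × K.carrier,
        (u = (f x, g x) ∨ u = (f x, f x) ∨ u = (g x, g x)) → u ∈ Subgroup.normalizer (M : Set (K.carrier × K.carrier)) := by
      intro x u hu
      rw [Subgroup.mem_normalizer_iff]
      intro m
      constructor
      · intro hm; exact hconj x u hu m hm
      · intro hm
        have hu' : (u⁻¹ = (f x⁻¹, g x⁻¹) ∨ u⁻¹ = (f x⁻¹, f x⁻¹) ∨ u⁻¹ = (g x⁻¹, g x⁻¹)) := by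
          rcases hu with rfl | rfl | rfl
          · left; ext <;> simp
          · right; left; ext <;> simp
          · right; right; ext <;> simp
        have := hconj x⁻¹ u⁻¹ hu' _ hm
        simpa [mul_assoc] using this
    refine sup_le ?_ (sup_le ?_ ?_)
    · rintro u ⟨x, rfl⟩; exact hgen x _ (Or.inl rfl)
    · rintro u ⟨x, rfl⟩; exact hgen x _ (Or.inr (Or.inl rfl))
    · rintro u ⟨x, rfl⟩; exact hgen x _ (Or.inr (Or.inr rfl))
  haveI hMnormal : (M.subgroupOf L).Normal := by
    constructor
    intro m hm l
    rw [Subgroup.mem_subgroupOf] at hm ⊢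
    have hl := hnormalizer l.2
    rw [Subgroup.mem_normalizer_iff] at hl
    simpa using (hl m.1).mp hm
  -- the quotient group
  set Kq := L ⧸ (M.subgroupOf L) with hKq
  have hLmem : 𝒱.Mem ⟨L⟩ :=
    𝒱.subgroup_closed ⟨K.carrier × K.carrier⟩ L (mem_prod_self 𝒱 K hK)
  have hKqMem : 𝒱.Mem ⟨Kq⟩ :=
    𝒱.quotient_closed ⟨L⟩ ⟨Kq⟩ (QuotientGroup.mk' (M.subgroupOf L))
      (QuotientGroup.mk'_surjective _) hLmem
  -- homs
  have hmemL1 : ∀ x : F, (f.prod g) x ∈ L := by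
    intro x; exact le_sup_left (α := Subgroup _) ⟨x, rfl⟩
  have hmemL2 : ∀ x : F, (f.prod f) x ∈ L := by
    intro x; exact le_sup_right (α := Subgroup _) (le_sup_left (α := Subgroup _) ⟨x, rfl⟩)
  set φ₀ : F →* L := (f.prod g).codRestrict L hmemL1 with hφ₀
  set ψ₀ : F →* L := (f.prod f).codRestrict L hmemL2 with hψ₀
  set q : L →* Kq := QuotientGroup.mk' (M.subgroupOf L) with hq
  have hΦker : π.ker ≤ (q.comp φ₀).ker := by
    intro n hn
    rw [MonoidHom.mem_ker, MonoidHom.comp_apply]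
    rw [hq, QuotientGroup.mk'_apply, QuotientGroup.eq_one_iff]
    rw [Subgroup.mem_subgroupOf]
    exact ⟨n, hn, rfl⟩
  have hΨker : π.ker ≤ (q.comp ψ₀).ker := by
    intro n hn
    rw [MonoidHom.mem_ker, MonoidHom.comp_apply]
    rw [hq, QuotientGroup.mk'_apply, QuotientGroup.eq_one_iff]
    rw [Subgroup.mem_subgroupOf]
    refine ⟨n, hn, ?_⟩
    have h2 : g n = f n := (hker n hn).symm
    ext
    · simp [hψ₀]
    · simp [hψ₀, h2]
  set e := QuotientGroup.quotientKerEquivOfSurjective π hsurj with he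
  have hesymm : ∀ x : F, e.symm (π x) = QuotientGroup.mk x := by
    intro x
    rw [MulEquiv.symm_apply_eq]
    rfl
  set φ : G →* Kq := (QuotientGroup.lift π.ker (q.comp φ₀) hΦker).comp e.symm.toMonoidHom with hφ
  set ψ : G →* Kq := (QuotientGroup.lift π.ker (q.comp ψ₀) hΨker).comp e.symm.toMonoidHom with hψ
  have hφapp : ∀ x : F, φ (π x) = q (φ₀ x) := by
    intro x
    simp only [hφ, MonoidHom.comp_apply, MulEquiv.coe_toMonoidHom, hesymm x]
    rfl
  have hψapp : ∀ x : F, ψ (π x) = q (ψ₀ x) := by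
    intro x
    simp only [hψ, MonoidHom.comp_apply, MulEquiv.coe_toMonoidHom, hesymm x]
    rfl
  have hagree : ∀ y ∈ H₀, φ y = ψ y := by
    intro y hy
    obtain ⟨x, rfl⟩ := hsurj y
    rw [hφapp, hψapp]
    have hx : x ∈ H₀.comap π := hy
    have : f x = g x := hfg x hx
    congr 1
    ext <;> simp [hφ₀, hψ₀, this]
  have hmain := ha ⟨Kq⟩ hKqMem φ ψ hagree
  rw [hφapp, hψapp] at hmain
  have : (φ₀ a)⁻¹ * ψ₀ a ∈ M.subgroupOf L := by
    rwa [hq, QuotientGroup.mk'_apply, QuotientGroup.mk'_apply, QuotientGroup.eq] at hmain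
  rw [Subgroup.mem_subgroupOf] at this
  obtain ⟨n, hn, hne⟩ := this
  have h1 : f n = (f a)⁻¹ * f a := congrArg Prod.fst hne
  have h2 : g n = (g a)⁻¹ * f a := congrArg Prod.snd hne
  have hfn : f n = 1 := by rw [h1, inv_mul_cancel]
  have : (g a)⁻¹ * f a = 1 := by rw [← h2, ← hker n hn, hfn]
  have := (inv_mul_eq_one).mp this
  exact this.symm

/-- Compactness: dominion membership is witnessed in a finitely generated subgroup. -/
lemma dominion_fg (𝒱 : GroupVariety.{u}) {G : Type u} [Group G] (H : Subgroup G) (a : G)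
    (ha : a ∈ dominion 𝒱.Mem G H) :
    ∃ (T : Finset G) (haT : a ∈ Subgroup.closure (T : Set G)),
      (⟨a, haT⟩ : Subgroup.closure (T : Set G)) ∈
        dominion 𝒱.Mem (Subgroup.closure (T : Set G))
          (H.subgroupOf (Subgroup.closure (T : Set G))) := by
  classical
  by_contra hcon
  push_neg at hcon
  have haP : ∀ T : Finset G, a ∈ Subgroup.closure ((insert a T : Finset G) : Set G) :=
    fun T => Subgroup.subset_closure (by simp)
  have hnd : ∀ T : Finset G, ∃ K : GroupT.{u}, 𝒱.Mem K ∧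
      ∃ f' g' : Subgroup.closure ((insert a T : Finset G) : Set G) →* K.carrier,
        (∀ h ∈ H.subgroupOf (Subgroup.closure ((insert a T : Finset G) : Set G)), f' h = g' h) ∧
        f' ⟨a, haP T⟩ ≠ g' ⟨a, haP T⟩ := by
    intro T
    have := hcon (insert a T) (haP T)
    simp only [dominion, Set.mem_setOf_eq] at this
    push_neg at this
    exact this
  choose K hKmem ff gg hfgK hne using hnd
  set W : Subgroup (∀ T : Finset G, (K T).carrier) :=
    { carrier := {x | ∃ T₀ : Finset G, ∀ T : Finset G, T₀ ⊆ T → x T = 1}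
      one_mem' := ⟨∅, fun T _ => rfl⟩
      mul_mem' := by
        rintro x y ⟨T₀, hx⟩ ⟨T₁, hy⟩
        exact ⟨T₀ ∪ T₁, fun T hT => by
          rw [Pi.mul_apply, hx T (le_trans Finset.subset_union_left hT),
            hy T (le_trans Finset.subset_union_right hT), one_mul]⟩
      inv_mem' := by
        rintro x ⟨T₀, hx⟩
        exact ⟨T₀, fun T hT => by rw [Pi.inv_apply, hx T hT, inv_one]⟩ } with hW
  haveI hWnormal : W.Normal := by
    constructor
    rintro x ⟨T₀, hx⟩ g
    exact ⟨T₀, fun T hT => by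
      simp only [Pi.mul_apply, Pi.inv_apply, hx T hT, mul_one, mul_inv_cancel]⟩
  have hQmem : 𝒱.Mem ⟨(∀ T : Finset G, (K T).carrier) ⧸ W⟩ :=
    𝒱.quotient_closed ⟨∀ T : Finset G, (K T).carrier⟩ ⟨(∀ T : Finset G, (K T).carrier) ⧸ W⟩
      (QuotientGroup.mk' W) (QuotientGroup.mk'_surjective _)
      (𝒱.pi_closed (Finset G) K hKmem)
  -- the two maps into the reduced product
  have hmulW : ∀ (c : ∀ T : Finset G,
      (Subgroup.closure ((insert a T : Finset G) : Set G)) →* (K T).carrier) (x y : G),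
      ((fun z : G => fun T : Finset G =>
          if h : z ∈ Subgroup.closure ((insert a T : Finset G) : Set G) then c T ⟨z, h⟩ else 1)
            (x * y))⁻¹ *
        ((fun z : G => fun T : Finset G =>
          if h : z ∈ Subgroup.closure ((insert a T : Finset G) : Set G) then c T ⟨z, h⟩ else 1) x *
         (fun z : G => fun T : Finset G =>
          if h : z ∈ Subgroup.closure ((insert a T : Finset G) : Set G) then c T ⟨z, h⟩ else 1) y)
        ∈ W := by
    intro c x y
    refine ⟨{x, y}, fun T hT => ?_⟩
    have hxT : x ∈ T := hT (by simp)
    have hyT : y ∈ T := hT (by simp)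
    have hx : x ∈ Subgroup.closure ((insert a T : Finset G) : Set G) :=
      Subgroup.subset_closure (by simp [hxT])
    have hy : y ∈ Subgroup.closure ((insert a T : Finset G) : Set G) :=
      Subgroup.subset_closure (by simp [hyT])
    have hxy : x * y ∈ Subgroup.closure ((insert a T : Finset G) : Set G) := mul_mem hx hy
    simp only [Pi.mul_apply, Pi.inv_apply]
    rw [dif_pos hx, dif_pos hy, dif_pos hxy]
    have heq : (⟨x * y, hxy⟩ : Subgroup.closure ((insert a T : Finset G) : Set G)) =
        ⟨x, hx⟩ * ⟨y, hy⟩ := rfl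
    rw [heq, map_mul, inv_mul_cancel]
  set fbar : G →* (∀ T : Finset G, (K T).carrier) ⧸ W := MonoidHom.mk'
    (fun x => QuotientGroup.mk (fun T : Finset G =>
      if h : x ∈ Subgroup.closure ((insert a T : Finset G) : Set G) then ff T ⟨x, h⟩ else 1))
    (by
      intro x y
      rw [← QuotientGroup.mk_mul]
      exact (QuotientGroup.eq).mpr (hmulW ff x y)) with hfbar
  set gbar : G →* (∀ T : Finset G, (K T).carrier) ⧸ W := MonoidHom.mk'
    (fun x => QuotientGroup.mk (fun T : Finset G =>
      if h : x ∈ Subgroup.closure ((insert a T : Finset G) : Set G) then gg T ⟨x, h⟩ else 1))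
    (by
      intro x y
      rw [← QuotientGroup.mk_mul]
      exact (QuotientGroup.eq).mpr (hmulW gg x y)) with hgbar
  have hagree : ∀ h ∈ H, fbar h = gbar h := by
    intro h hh
    refine (QuotientGroup.eq).mpr ⟨{h}, fun T hT => ?_⟩
    have hhT' : h ∈ T := hT (by simp)
    have hhT : h ∈ Subgroup.closure ((insert a T : Finset G) : Set G) :=
      Subgroup.subset_closure (by simp [hhT'])
    simp only [Pi.mul_apply, Pi.inv_apply]
    rw [dif_pos hhT, dif_pos hhT]
    rw [hfgK T ⟨h, hhT⟩ (by rwa [Subgroup.mem_subgroupOf]), inv_mul_cancel]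
  have hmain := ha ⟨(∀ T : Finset G, (K T).carrier) ⧸ W⟩ hQmem fbar gbar hagree
  obtain ⟨T₀, hT₀⟩ := (QuotientGroup.eq).mp hmain
  have hTT := hT₀ T₀ (le_refl _)
  simp only [Pi.mul_apply, Pi.inv_apply] at hTT
  rw [dif_pos (haP T₀), dif_pos (haP T₀)] at hTT
  exact hne T₀ ((inv_mul_eq_one).mp hTT)

/-- The relatively free group of sufficient finite rank surjects onto the subgroup
generated by a finite set in a group of the variety. -/
lemma relativelyFree_surj (𝒱 : GroupVariety.{u}) (Gt : GroupT.{u}) (hmem : 𝒱.Mem Gt)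
    (T : Finset Gt.carrier) :
    ∃ π : relativelyFree 𝒱 (ULift.{u} (Fin (T.card + 2))) →*
        Subgroup.closure (T : Set Gt.carrier),
      Function.Surjective π := by
  classical
  set n : ℕ := T.card + 2 with hn
  set π₀ : FreeGroup (ULift.{u} (Fin n)) →* Subgroup.closure (T : Set Gt.carrier) :=
    FreeGroup.lift (fun i : ULift.{u} (Fin n) =>
      if h : (i.down : ℕ) < T.card then
        (⟨(T.equivFin.symm ⟨i.down, h⟩ : T), Subgroup.subset_closure (by simp)⟩ :
          Subgroup.closure (T : Set Gt.carrier))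
      else 1) with hπ₀
  have hsurj₀ : Function.Surjective π₀ := by
    have hmap : Subgroup.map (Subgroup.closure (T : Set Gt.carrier)).subtype π₀.range = Subgroup.closure (T : Set Gt.carrier) := by
      apply le_antisymm
      · refine le_trans (Subgroup.map_mono le_top) ?_
        rw [← MonoidHom.range_eq_map, Subgroup.range_subtype]
      · rw [Subgroup.closure_le]
        intro s hs
        have hsT : s ∈ T := hs
        set j : Fin T.card := T.equivFin ⟨s, hsT⟩ with hj
        have hcard : T.card ≤ n := by omega
        refine ⟨π₀ (FreeGroup.of (ULift.up (Fin.castLE hcard j))), ⟨_, rfl⟩, ?_⟩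
        have hlt : ((Fin.castLE hcard j : Fin n) : ℕ) < T.card := j.2
        simp only [hπ₀, FreeGroup.lift_apply_of]
        rw [dif_pos hlt]
        have heq : (⟨((Fin.castLE hcard j : Fin n) : ℕ), hlt⟩ : Fin T.card) = j :=
          Fin.ext rfl
        rw [heq, hj, Equiv.symm_apply_apply]
        rfl
    intro p
    have hp : (p : Gt.carrier) ∈ Subgroup.map (Subgroup.closure (T : Set Gt.carrier)).subtype π₀.range := by
      rw [hmap]; exact p.2
    obtain ⟨q, hq, hqe⟩ := hp
    obtain ⟨x, rfl⟩ := hq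
    exact ⟨x, Subtype.ext hqe⟩
  have hver : verbalSubgroup 𝒱 (FreeGroup (ULift.{u} (Fin n))) ≤ π₀.ker := by
    have hPmem : 𝒱.Mem ⟨Subgroup.closure (T : Set Gt.carrier)⟩ :=
      𝒱.subgroup_closed Gt (Subgroup.closure (T : Set Gt.carrier)) hmem
    have hkermem : π₀.ker ∈ {M : Subgroup (FreeGroup (ULift.{u} (Fin n))) |
        ∃ h : M.Normal, (letI := h; 𝒱.Mem ⟨FreeGroup (ULift.{u} (Fin n)) ⧸ M⟩)} := by
      refine ⟨MonoidHom.normal_ker π₀, ?_⟩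
      exact 𝒱.iso_closed (G := ⟨Subgroup.closure (T : Set Gt.carrier)⟩)
        (QuotientGroup.quotientKerEquivOfSurjective π₀ hsurj₀).symm hPmem
    simp only [verbalSubgroup]
    exact iInf₂_le π₀.ker hkermem
  refine ⟨QuotientGroup.lift (verbalSubgroup 𝒱 (FreeGroup (ULift.{u} (Fin n)))) π₀ hver, ?_⟩
  intro p
  obtain ⟨x, hx⟩ := hsurj₀ p
  exact ⟨QuotientGroup.mk x, hx⟩


theorem stmt15 (𝒱 : GroupVariety.{u}) (h : HasNontrivialDominions 𝒱.Mem) :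
    ∃ n : ℕ, 1 < n ∧
      ∃ H : Subgroup (relativelyFree 𝒱 (ULift.{u} (Fin n))),
        (H : Set (relativelyFree 𝒱 (ULift.{u} (Fin n)))) ⊂
          dominion 𝒱.Mem (relativelyFree 𝒱 (ULift.{u} (Fin n))) H := by
  obtain ⟨G, H, hGmem, hss⟩ := h
  obtain ⟨a, hadom, haH⟩ := Set.exists_of_ssubset hss
  obtain ⟨T, haT, hdomT⟩ := dominion_fg 𝒱 H a hadom
  obtain ⟨π, hπsurj⟩ := relativelyFree_surj 𝒱 G hGmem T
  refine ⟨T.card + 2, by omega,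
    Subgroup.comap π (H.subgroupOf (Subgroup.closure (T : Set G.carrier))), ?_⟩
  obtain ⟨a', ha'⟩ := hπsurj ⟨a, haT⟩
  rw [Set.ssubset_def]
  constructor
  · intro x hx K hK f g hfg
    exact hfg x hx
  · intro hcontra
    have hdom' : a' ∈ dominion 𝒱.Mem (relativelyFree 𝒱 (ULift.{u} (Fin (T.card + 2))))
        (Subgroup.comap π (H.subgroupOf (Subgroup.closure (T : Set G.carrier)))) := by
      refine dominion_lift 𝒱 π hπsurj _ a' ?_
      rw [ha']
      exact hdomT
    have hmem : a' ∈ Subgroup.comap π (H.subgroupOf (Subgroup.closure (T : Set G.carrier))) :=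
      hcontra hdom'
    rw [Subgroup.mem_comap, ha', Subgroup.mem_subgroupOf] at hmem
    exact haH hmem
end

section
/- Let 𝒱 be a variety of groups with instances of nontrivial dominions, and let F = F_∞(𝒱) be the relatively free 𝒱-group of countably infinite rank. Then there exists a subgroup H of F such that H is strictly contained in dom_F^𝒱(H). -/
set_option maxHeartbeats 1000000

universe u

open Monoid
open scoped Monoid.Coprod

section AuxDominion


variable (𝒱 : GroupVariety.{u})

theorem verbal_le_ker {P K : Type u} [Group P] [Group K]
    (hK : 𝒱.Mem ⟨K⟩) (φ : P →* K) : verbalSubgroup 𝒱 P ≤ φ.ker := by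
  have h1 : 𝒱.Mem ⟨↥φ.range⟩ := 𝒱.subgroup_closed ⟨K⟩ φ.range hK
  have h2 : 𝒱.Mem ⟨P ⧸ φ.ker⟩ :=
    𝒱.iso_closed (QuotientGroup.quotientKerEquivRange φ).symm h1
  exact iInf₂_le φ.ker ⟨inferInstance, h2⟩

theorem mem_vquot (P : Type u) [Group P] :
    𝒱.Mem ⟨P ⧸ verbalSubgroup 𝒱 P⟩ := by
  classical
  set S := {M : Subgroup P | ∃ h : M.Normal, (letI := h; 𝒱.Mem ⟨P ⧸ M⟩)} with hS
  let K : ↥S → GroupT.{u} := fun i => letI := i.2.choose; ⟨P ⧸ i.1⟩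
  have hK : ∀ i, 𝒱.Mem (K i) := fun i => i.2.choose_spec
  letI : ∀ i : ↥S, (i.1 : Subgroup P).Normal := fun i => i.2.choose
  let Φ : P →* ∀ i, (K i).carrier :=
    { toFun := fun x i => (QuotientGroup.mk x : P ⧸ i.1)
      map_one' := by funext i; exact congrArg _ rfl
      map_mul' := fun x y => by funext i; rfl }
  have hker : Φ.ker = verbalSubgroup 𝒱 P := by
    ext x
    simp only [MonoidHom.mem_ker, verbalSubgroup, Subgroup.mem_iInf]
    constructor
    · intro hx M hM
      have := congrFun hx ⟨M, hM⟩
      exact (@QuotientGroup.eq_one_iff P _ M hM.choose x).1 this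
    · intro hx
      funext i
      have : x ∈ (i.1 : Subgroup P) := hx i.1 i.2
      exact (@QuotientGroup.eq_one_iff P _ i.1 i.2.choose x).2 this
  have hpi : 𝒱.Mem ⟨∀ i, (K i).carrier⟩ := 𝒱.pi_closed _ K hK
  have hrange : 𝒱.Mem ⟨↥Φ.range⟩ := 𝒱.subgroup_closed _ Φ.range hpi
  have e : ↥Φ.range ≃* P ⧸ verbalSubgroup 𝒱 P :=
    (QuotientGroup.quotientKerEquivRange Φ).symm.trans
      (QuotientGroup.quotientMulEquivOfEq hker)
  exact 𝒱.iso_closed e hrange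

theorem mem_relativelyFree (X : Type u) : 𝒱.Mem ⟨relativelyFree 𝒱 X⟩ :=
  mem_vquot 𝒱 (FreeGroup X)

theorem subset_dominion {C : GroupT.{u} → Prop} {G : Type u} [Group G] (H : Subgroup G) :
    (H : Set G) ⊆ dominion C G H :=
  fun x hx _K _hK _f _g hfg => hfg x hx
open Monoid
open scoped Monoid.Coprod

section Amal

variable (𝒱 : GroupVariety.{u}) {Γ : Type u} [Group Γ] (H : Subgroup Γ)

def amalRel : Set (Γ ∗ Γ) := {x | ∃ h ∈ H, x = Coprod.inl h * (Coprod.inr h)⁻¹}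

def AmalW : Type u := (Γ ∗ Γ) ⧸ Subgroup.normalClosure (amalRel H)

noncomputable instance : Group (AmalW H) := QuotientGroup.Quotient.group _

def Amal : Type u := AmalW H ⧸ verbalSubgroup 𝒱 (AmalW H)

noncomputable instance : Group (Amal 𝒱 H) := QuotientGroup.Quotient.group _

noncomputable def lam : Γ →* Amal 𝒱 H :=
  (QuotientGroup.mk' _).comp ((QuotientGroup.mk' _).comp Coprod.inl)

noncomputable def rho : Γ →* Amal 𝒱 H :=
  (QuotientGroup.mk' _).comp ((QuotientGroup.mk' _).comp Coprod.inr)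

theorem mem_amal : 𝒱.Mem ⟨Amal 𝒱 H⟩ := mem_vquot 𝒱 (AmalW H)

theorem lam_eq_rho {h : Γ} (hh : h ∈ H) : lam 𝒱 H h = rho 𝒱 H h := by
  have hmem : Coprod.inl h * (Coprod.inr h)⁻¹ ∈ Subgroup.normalClosure (amalRel H) :=
    Subgroup.subset_normalClosure ⟨h, hh, rfl⟩
  have h1 : (QuotientGroup.mk (Coprod.inl h * (Coprod.inr h)⁻¹) : AmalW H) = 1 :=
    (QuotientGroup.eq_one_iff _).2 hmem
  rw [QuotientGroup.mk_mul, QuotientGroup.mk_inv] at h1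
  have := mul_eq_one_iff_eq_inv.mp h1
  rw [inv_inv] at this
  simp only [lam, rho, MonoidHom.comp_apply, QuotientGroup.mk'_apply]
  exact congrArg _ this

theorem amal_induction {C : Amal 𝒱 H → Prop} (x : Amal 𝒱 H)
    (hl : ∀ y, C (lam 𝒱 H y)) (hr : ∀ y, C (rho 𝒱 H y))
    (hmul : ∀ a b, C a → C b → C (a * b)) : C x := by
  refine QuotientGroup.induction_on x (fun w => ?_)
  refine QuotientGroup.induction_on w (fun v => ?_)
  exact Coprod.induction_on v (fun m => hl m) (fun n => hr n) (fun a b ha hb => hmul _ _ ha hb)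

theorem amal_hom_ext {K : Type*} [Group K] {φ₁ φ₂ : Amal 𝒱 H →* K}
    (h1 : ∀ x, φ₁ (lam 𝒱 H x) = φ₂ (lam 𝒱 H x))
    (h2 : ∀ x, φ₁ (rho 𝒱 H x) = φ₂ (rho 𝒱 H x)) : ∀ z, φ₁ z = φ₂ z := by
  intro z
  refine amal_induction 𝒱 H (C := fun w => φ₁ w = φ₂ w) z h1 h2 (fun a b ha hb => ?_)
  show φ₁ (a * b) = φ₂ (a * b)
  rw [map_mul, map_mul, ha, hb]

theorem amal_lift {K : Type u} [Group K] (hK : 𝒱.Mem ⟨K⟩) (f g : Γ →* K)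
    (hfg : ∀ h ∈ H, f h = g h) :
    ∃ φ : Amal 𝒱 H →* K, (∀ x, φ (lam 𝒱 H x) = f x) ∧ (∀ x, φ (rho 𝒱 H x) = g x) := by
  let ψ : (Γ ∗ Γ) →* K := Coprod.lift f g
  have h1 : Subgroup.normalClosure (amalRel H) ≤ ψ.ker := by
    refine Subgroup.normalClosure_le_normal ?_
    rintro x ⟨h, hh, rfl⟩
    simp only [SetLike.mem_coe, MonoidHom.mem_ker, map_mul, map_inv,
      Coprod.lift_apply_inl, Coprod.lift_apply_inr, ψ]
    rw [hfg h hh, mul_inv_cancel]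
  let ψ₁ : AmalW H →* K := QuotientGroup.lift _ ψ h1
  have h2 : verbalSubgroup 𝒱 (AmalW H) ≤ ψ₁.ker := verbal_le_ker 𝒱 hK ψ₁
  exact ⟨QuotientGroup.lift _ ψ₁ h2, fun x => rfl, fun x => rfl⟩

end Amal

theorem dominion_comap {F Γ : Type u} [Group F] [Group Γ]
    (hF : 𝒱.Mem ⟨F⟩) (π : F →* Γ) (hπ : Function.Surjective π)
    (H₀ : Subgroup Γ) {a : Γ} (ha : a ∈ dominion 𝒱.Mem Γ H₀)
    {a' : F} (ha' : π a' = a) :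
    a' ∈ dominion 𝒱.Mem F (H₀.comap π) := by
  classical
  set H₁ : Subgroup F := H₀.comap π with hH₁
  have key : lam 𝒱 H₀ a = rho 𝒱 H₀ a :=
    ha ⟨Amal 𝒱 H₀⟩ (mem_amal 𝒱 H₀) (lam 𝒱 H₀) (rho 𝒱 H₀) (fun h hh => lam_eq_rho 𝒱 H₀ hh)
  obtain ⟨q, hql, hqr⟩ := amal_lift 𝒱 H₁ (mem_amal 𝒱 H₀)
    ((lam 𝒱 H₀).comp π) ((rho 𝒱 H₀).comp π)
    (fun h hh => lam_eq_rho 𝒱 H₀ hh)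
  obtain ⟨fold, hfl, hfr⟩ := amal_lift 𝒱 H₁ hF (MonoidHom.id F) (MonoidHom.id F)
    (fun _ _ => rfl)
  have hkerle : π.ker ≤ H₁ := fun n hn => by
    simp only [hH₁, Subgroup.mem_comap]
    rw [MonoidHom.mem_ker] at hn
    rw [hn]; exact H₀.one_mem
  have hlr : ∀ n ∈ π.ker, lam 𝒱 H₁ n = rho 𝒱 H₁ n := fun n hn =>
    lam_eq_rho 𝒱 H₁ (hkerle hn)
  set lamN : Subgroup (Amal 𝒱 H₁) := π.ker.map (lam 𝒱 H₁) with hlamN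
  have hconj : ∀ g : Amal 𝒱 H₁, ∀ z ∈ lamN, g * z * g⁻¹ ∈ lamN := by
    intro g
    induction g using amal_induction with
    | hl y =>
      rintro z ⟨n, hn, rfl⟩
      exact ⟨y * n * y⁻¹, (MonoidHom.normal_ker π).conj_mem n hn y,
        by simp [map_mul, map_inv]⟩
    | hr y =>
      rintro z ⟨n, hn, rfl⟩
      refine ⟨y * n * y⁻¹, (MonoidHom.normal_ker π).conj_mem n hn y, ?_⟩
      rw [hlr _ ((MonoidHom.normal_ker π).conj_mem n hn y), hlr n hn]
      simp [map_mul, map_inv]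
    | hmul c d hc hd =>
      intro z hz
      have h1 := hd z hz
      have h2 := hc _ h1
      have : c * (d * z * d⁻¹) * c⁻¹ = (c * d) * z * (c * d)⁻¹ := by group
      rwa [this] at h2
  haveI : lamN.Normal := ⟨fun z hz g => hconj g z hz⟩
  have memAq : 𝒱.Mem ⟨Amal 𝒱 H₁ ⧸ lamN⟩ :=
    𝒱.quotient_closed ⟨Amal 𝒱 H₁⟩ ⟨Amal 𝒱 H₁ ⧸ lamN⟩ (QuotientGroup.mk' lamN)
      (QuotientGroup.mk'_surjective lamN) (mem_amal 𝒱 H₁)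
  -- induced maps Γ →* Amal 𝒱 H₁ ⧸ lamN
  have hkill1 : π.ker ≤ ((QuotientGroup.mk' lamN).comp (lam 𝒱 H₁)).ker := by
    intro n hn
    simp only [MonoidHom.mem_ker, MonoidHom.comp_apply, QuotientGroup.mk'_apply]
    exact (QuotientGroup.eq_one_iff _).2 ⟨n, hn, rfl⟩
  have hkill2 : π.ker ≤ ((QuotientGroup.mk' lamN).comp (rho 𝒱 H₁)).ker := by
    intro n hn
    simp only [MonoidHom.mem_ker, MonoidHom.comp_apply, QuotientGroup.mk'_apply]
    rw [← hlr n hn]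
    exact (QuotientGroup.eq_one_iff _).2 ⟨n, hn, rfl⟩
  set rinv := Function.surjInv hπ with hrinv
  have hri : Function.RightInverse rinv π := Function.rightInverse_surjInv hπ
  set lamBar := π.liftOfRightInverse rinv hri ⟨(QuotientGroup.mk' lamN).comp (lam 𝒱 H₁), hkill1⟩
    with hlamBar
  set rhoBar := π.liftOfRightInverse rinv hri ⟨(QuotientGroup.mk' lamN).comp (rho 𝒱 H₁), hkill2⟩
    with hrhoBar
  have hlamBar' : ∀ x : F, lamBar (π x) = QuotientGroup.mk' lamN (lam 𝒱 H₁ x) :=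
    fun x => π.liftOfRightInverse_comp_apply rinv hri _ x
  have hrhoBar' : ∀ x : F, rhoBar (π x) = QuotientGroup.mk' lamN (rho 𝒱 H₁ x) :=
    fun x => π.liftOfRightInverse_comp_apply rinv hri _ x
  have hagree : ∀ h ∈ H₀, lamBar h = rhoBar h := by
    intro h hh
    obtain ⟨x, rfl⟩ := hπ h
    rw [hlamBar' x, hrhoBar' x, lam_eq_rho 𝒱 H₁ (by simpa [hH₁, Subgroup.mem_comap] using hh)]
  obtain ⟨β, hβl, hβr⟩ := amal_lift 𝒱 H₀ memAq lamBar rhoBar hagree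
  have hβq : ∀ z, β (q z) = QuotientGroup.mk' lamN z := by
    refine amal_hom_ext 𝒱 H₁ (φ₁ := β.comp q) (φ₂ := QuotientGroup.mk' lamN) ?_ ?_
    · intro x
      simp only [MonoidHom.comp_apply]
      rw [hql x]
      show β (lam 𝒱 H₀ (π x)) = _
      rw [hβl (π x), hlamBar' x]
    · intro x
      simp only [MonoidHom.comp_apply]
      rw [hqr x]
      show β (rho 𝒱 H₀ (π x)) = _
      rw [hβr (π x), hrhoBar' x]
  -- main computation
  set z₀ := lam 𝒱 H₁ a' * (rho 𝒱 H₁ a')⁻¹ with hz₀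
  have hqz₀ : q z₀ = 1 := by
    rw [hz₀, map_mul, map_inv, hql, hqr]
    show lam 𝒱 H₀ (π a') * (rho 𝒱 H₀ (π a'))⁻¹ = 1
    rw [ha', key, mul_inv_cancel]
  have hz₀mem : z₀ ∈ lamN := by
    have := hβq z₀
    rw [hqz₀, map_one] at this
    have h1 : QuotientGroup.mk' lamN z₀ = 1 := this.symm
    exact (QuotientGroup.eq_one_iff _).1 (by simpa using h1)
  obtain ⟨n, hn, hlamn⟩ := hz₀mem
  have hfold : fold z₀ = 1 := by
    rw [hz₀, map_mul, map_inv, hfl, hfr]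
    simp
  have hn1 : n = 1 := by
    have := congrArg fold hlamn
    rw [hfl n, hfold] at this
    simpa using this
  have hlamrho : lam 𝒱 H₁ a' = rho 𝒱 H₁ a' := by
    have : z₀ = 1 := by rw [← hlamn, hn1, map_one]
    rw [hz₀] at this
    exact mul_inv_eq_one.mp this
  -- conclude
  intro K hK f g hfg
  obtain ⟨φ, hφl, hφr⟩ := amal_lift 𝒱 H₁ hK f g hfg
  calc f a' = φ (lam 𝒱 H₁ a') := (hφl a').symm
    _ = φ (rho 𝒱 H₁ a') := by rw [hlamrho]
    _ = g a' := hφr a'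

theorem exists_fg_instance (G : GroupT.{u}) (hG : 𝒱.Mem G) (H : Subgroup G.carrier)
    {a : G.carrier} (ha : a ∈ dominion 𝒱.Mem G.carrier H) :
    ∃ P : Subgroup G.carrier, P.FG ∧ ∃ haP : a ∈ P,
      (⟨a, haP⟩ : P) ∈ dominion 𝒱.Mem P (H.subgroupOf P) := by
  classical
  by_contra hc
  push_neg at hc
  set I := {P : Subgroup G.carrier // P.FG ∧ a ∈ P} with hI
  have hW : ∀ i : I,
      ∃ K : GroupT.{u}, 𝒱.Mem K ∧ ∃ f g : ↥i.1 →* K.carrier,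
        (∀ h ∈ H.subgroupOf i.1, f h = g h) ∧ f ⟨a, i.2.2⟩ ≠ g ⟨a, i.2.2⟩ := by
    rintro ⟨P, hPfg, haP⟩
    have := hc P hPfg haP
    simp only [dominion, Set.mem_setOf_eq] at this
    push_neg at this
    obtain ⟨K, hK, f, g, hfg, hne⟩ := this
    exact ⟨K, hK, f, g, hfg, hne⟩
  choose K hK f g hfg hne using hW
  have hfg_sup : ∀ P Q : Subgroup G.carrier, P.FG → Q.FG → (P ⊔ Q).FG := by
    rintro P Q ⟨s, hs⟩ ⟨t, ht⟩
    exact ⟨s ∪ t, by rw [Finset.coe_union, Subgroup.closure_union, hs, ht]⟩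
  have hclmem : ∀ (s : Finset G.carrier), a ∈ (s : Set G.carrier) →
      ∃ i : I, i.1 = Subgroup.closure ↑s := by
    intro s hs
    exact ⟨⟨Subgroup.closure ↑s, ⟨s, rfl⟩, Subgroup.subset_closure hs⟩, rfl⟩
  -- the subgroup of eventually-trivial elements
  set Z : Subgroup (∀ i : I, (K i).carrier) :=
    { carrier := {k | ∃ i₀ : I, ∀ i : I, i₀.1 ≤ i.1 → k i = 1}
      one_mem' := ⟨⟨Subgroup.closure {a}, ⟨{a}, by simp⟩,
          Subgroup.subset_closure rfl⟩, fun i _ => rfl⟩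
      mul_mem' := by
        rintro x y ⟨i₀, hx⟩ ⟨i₁, hy⟩
        refine ⟨⟨i₀.1 ⊔ i₁.1, hfg_sup _ _ i₀.2.1 i₁.2.1,
          le_sup_left (a := i₀.1) (b := i₁.1) i₀.2.2⟩, ?_⟩
        intro i hi
        have h1 := hx i (le_trans le_sup_left hi)
        have h2 := hy i (le_trans le_sup_right hi)
        simp only [Pi.mul_apply, h1, h2, mul_one]
      inv_mem' := by
        rintro x ⟨i₀, hx⟩
        exact ⟨i₀, fun i hi => by simp [hx i hi]⟩ } with hZ
  haveI : Z.Normal := by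
    constructor
    rintro x ⟨i₀, hx⟩ g
    exact ⟨i₀, fun i hi => by simp [hx i hi]⟩
  have memQt : 𝒱.Mem ⟨(∀ i : I, (K i).carrier) ⧸ Z⟩ :=
    𝒱.quotient_closed ⟨∀ i : I, (K i).carrier⟩ _ (QuotientGroup.mk' Z)
      (QuotientGroup.mk'_surjective Z) (𝒱.pi_closed I K hK)
  have hhom : ∀ (φ₀ : ∀ i : I, ↥i.1 →* (K i).carrier) (x y : G.carrier),
      (QuotientGroup.mk (fun i => if hx : x * y ∈ i.1 then φ₀ i ⟨x * y, hx⟩ else 1) :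
        (∀ i : I, (K i).carrier) ⧸ Z) =
      QuotientGroup.mk (fun i => if hx : x ∈ i.1 then φ₀ i ⟨x, hx⟩ else 1) *
        QuotientGroup.mk (fun i => if hy : y ∈ i.1 then φ₀ i ⟨y, hy⟩ else 1) := by
    intro φ₀ x y
    rw [← QuotientGroup.mk_mul, QuotientGroup.eq]
    refine ⟨⟨Subgroup.closure {a, x, y}, ⟨{a, x, y}, by simp⟩,
      Subgroup.subset_closure (by simp)⟩, ?_⟩
    intro i hi
    have hx : x ∈ i.1 := hi (Subgroup.subset_closure (by simp))
    have hy : y ∈ i.1 := hi (Subgroup.subset_closure (by simp))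
    have hxy : x * y ∈ i.1 := i.1.mul_mem hx hy
    simp only [Pi.mul_apply, Pi.inv_apply, dif_pos hx, dif_pos hy, dif_pos hxy]
    have he : (⟨x * y, hxy⟩ : ↥i.1) = ⟨x, hx⟩ * ⟨y, hy⟩ := rfl
    rw [he, map_mul]
    group
  have hone : ∀ (φ₀ : ∀ i : I, ↥i.1 →* (K i).carrier),
      (QuotientGroup.mk (fun i => if hx : (1 : G.carrier) ∈ i.1 then φ₀ i ⟨1, hx⟩ else 1) :
        (∀ i : I, (K i).carrier) ⧸ Z) = 1 := by
    intro φ₀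
    have : (fun i : I => if hx : (1 : G.carrier) ∈ i.1 then φ₀ i ⟨1, hx⟩ else 1) = 1 := by
      funext i
      rw [dif_pos i.1.one_mem]
      have he : (⟨(1 : G.carrier), i.1.one_mem⟩ : ↥i.1) = 1 := Subtype.ext rfl
      rw [he, map_one]
      rfl
    rw [this, QuotientGroup.mk_one]
  set Ff : G.carrier →* (∀ i : I, (K i).carrier) ⧸ Z :=
    { toFun := fun x => QuotientGroup.mk (fun i => if hx : x ∈ i.1 then f i ⟨x, hx⟩ else 1)
      map_one' := hone f
      map_mul' := fun x y => hhom f x y } with hFf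
  set Fg : G.carrier →* (∀ i : I, (K i).carrier) ⧸ Z :=
    { toFun := fun x => QuotientGroup.mk (fun i => if hx : x ∈ i.1 then g i ⟨x, hx⟩ else 1)
      map_one' := hone g
      map_mul' := fun x y => hhom g x y } with hFg
  have hagree : ∀ h ∈ H, Ff h = Fg h := by
    intro h hh
    show (QuotientGroup.mk (fun i => if hx : h ∈ i.1 then f i ⟨h, hx⟩ else 1) : _ ⧸ Z) =
      QuotientGroup.mk (fun i => if hx : h ∈ i.1 then g i ⟨h, hx⟩ else 1)
    rw [QuotientGroup.eq]
    refine ⟨⟨Subgroup.closure {a, h}, ⟨{a, h}, by simp⟩,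
      Subgroup.subset_closure (by simp)⟩, ?_⟩
    intro i hi
    have hhi : h ∈ i.1 := hi (Subgroup.subset_closure (by simp))
    have hsub : (⟨h, hhi⟩ : ↥i.1) ∈ H.subgroupOf i.1 := by
      simpa [Subgroup.mem_subgroupOf] using hh
    simp only [Pi.mul_apply, Pi.inv_apply, dif_pos hhi]
    rw [hfg i ⟨h, hhi⟩ hsub]
    group
  have hdom := ha ⟨(∀ i : I, (K i).carrier) ⧸ Z⟩ memQt Ff Fg hagree
  have hZa : (fun i : I => if hx : a ∈ i.1 then f i ⟨a, hx⟩ else 1)⁻¹ *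
      (fun i : I => if hx : a ∈ i.1 then g i ⟨a, hx⟩ else 1) ∈ Z := by
    rw [← QuotientGroup.eq]
    exact hdom
  obtain ⟨i₀, hi₀⟩ := hZa
  have hval := hi₀ i₀ le_rfl
  simp only [Pi.mul_apply, Pi.inv_apply, dif_pos i₀.2.2] at hval
  exact hne i₀ (inv_mul_eq_one.mp hval)

theorem exists_surj_relativelyFree (G : GroupT.{u}) (hG : 𝒱.Mem G)
    (P : Subgroup G.carrier) (hP : P.FG) :
    ∃ π : relativelyFree 𝒱 (ULift.{u} ℕ) →* ↥P, Function.Surjective π := by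
  classical
  obtain ⟨s, hs⟩ := hP
  subst hs
  set l := s.toList with hl
  have hmem : ∀ k (hk : k < l.length), l.get ⟨k, hk⟩ ∈ Subgroup.closure (↑s : Set G.carrier) :=
    fun k hk => Subgroup.subset_closure (by
      have := List.get_mem l ⟨k, hk⟩
      simpa [hl, Finset.mem_coe, ← Finset.mem_toList] using this)
  set c : ULift.{u} ℕ → ↥(Subgroup.closure (↑s : Set G.carrier)) :=
    fun n => if h : n.down < l.length then ⟨l.get ⟨n.down, h⟩, hmem n.down h⟩ else 1 with hc
  have hcl : Subgroup.closure (Set.range c) = ⊤ := by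
    rw [eq_top_iff, ← Subgroup.closure_closure_coe_preimage (k := (↑s : Set G.carrier))]
    refine Subgroup.closure_le _ |>.2 ?_
    intro x hx
    have hxs : (x : G.carrier) ∈ (↑s : Set G.carrier) := hx
    have hxl : (x : G.carrier) ∈ l := by
      simpa [hl, Finset.mem_toList] using hxs
    obtain ⟨k, hk⟩ := List.get_of_mem hxl
    refine Subgroup.subset_closure ⟨(⟨k.1⟩ : ULift.{u} ℕ), ?_⟩
    show (if h : k.1 < l.length then
        (⟨l.get ⟨k.1, h⟩, hmem k.1 h⟩ : ↥(Subgroup.closure (↑s : Set G.carrier))) else 1) = x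
    rw [dif_pos k.2]
    exact Subtype.ext hk
  set ψ : FreeGroup (ULift.{u} ℕ) →* ↥(Subgroup.closure (↑s : Set G.carrier)) :=
    FreeGroup.lift c with hψ
  have hψsurj : Function.Surjective ψ := by
    rw [← MonoidHom.range_eq_top]
    rw [hψ, FreeGroup.range_lift_eq_closure, hcl]
  have hPmem : 𝒱.Mem ⟨↥(Subgroup.closure (↑s : Set G.carrier))⟩ :=
    𝒱.subgroup_closed G _ hG
  have hker : verbalSubgroup 𝒱 (FreeGroup (ULift.{u} ℕ)) ≤ ψ.ker :=
    verbal_le_ker 𝒱 hPmem ψ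
  refine ⟨QuotientGroup.lift _ ψ hker, ?_⟩
  intro y
  obtain ⟨x, hx⟩ := hψsurj y
  exact ⟨QuotientGroup.mk x, hx⟩

end AuxDominion

theorem stmt16 (𝒱 : GroupVariety.{u}) (h : HasNontrivialDominions 𝒱.Mem) :
    ∃ H : Subgroup (relativelyFree 𝒱 (ULift.{u} ℕ)),
      (H : Set (relativelyFree 𝒱 (ULift.{u} ℕ))) ⊂
        dominion 𝒱.Mem (relativelyFree 𝒱 (ULift.{u} ℕ)) H := by
  obtain ⟨G, H, hG, hss⟩ := h
  obtain ⟨a, hadom, haH⟩ := Set.exists_of_ssubset hss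
  obtain ⟨P, hPfg, haP, hadomP⟩ := exists_fg_instance 𝒱 G hG H hadom
  obtain ⟨π, hπ⟩ := exists_surj_relativelyFree 𝒱 G hG P hPfg
  obtain ⟨a', ha'⟩ := hπ ⟨a, haP⟩
  have hdom : a' ∈ dominion 𝒱.Mem (relativelyFree 𝒱 (ULift.{u} ℕ))
      ((H.subgroupOf P).comap π) :=
    dominion_comap 𝒱 (mem_relativelyFree 𝒱 _) π hπ (H.subgroupOf P) hadomP ha'
  have ha'H₁ : a' ∉ (H.subgroupOf P).comap π := by
    intro hmem
    rw [Subgroup.mem_comap, ha'] at hmem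
    exact haH ((Subgroup.mem_subgroupOf).1 hmem)
  refine ⟨(H.subgroupOf P).comap π, ?_⟩
  rw [Set.ssubset_iff_of_subset (subset_dominion _)]
  exact ⟨a', hdom, ha'H₁⟩
end

section
/- Let F be the free group on countably infinitely many generators, and let W be a set of words (elements of F) containing at least one nonidentity element. Then the verbal subgroup W(F), namely the subgroup of F generated by all images φ(w) with w ∈ W and φ : F → F a group homomorphism, is a free group of countably infinite rank (i.e., it is isomorphic to the free group on countably infinitely many generators). -/
/-- The verbal subgroup `W(F)` of the free group `F` on countably many generators,
for a set of words `W`: the subgroup generated by all images `φ w` with `w ∈ W` and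
`φ : F →* F` a group homomorphism. -/
def verbalSubgroupOfWords (W : Set (FreeGroup ℕ)) : Subgroup (FreeGroup ℕ) :=
  Subgroup.closure {x : FreeGroup ℕ | ∃ w ∈ W, ∃ φ : FreeGroup ℕ →* FreeGroup ℕ, φ w = x}

private lemma mk_eq_prod (L : List (ℕ × Bool)) :
    FreeGroup.mk L = (L.map fun p => cond p.2 (FreeGroup.of p.1) (FreeGroup.of p.1)⁻¹).prod := by
  induction L with
  | nil => simp [← FreeGroup.one_eq_mk]
  | cons p t ih =>
    have h1 : FreeGroup.mk (p :: t) = FreeGroup.mk [p] * FreeGroup.mk t := by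
      rw [FreeGroup.mul_mk]; rfl
    have h2 : FreeGroup.mk [p] = cond p.2 (FreeGroup.of p.1) (FreeGroup.of p.1)⁻¹ := by
      obtain ⟨a, b⟩ := p
      cases b with
      | true => rfl
      | false =>
        show FreeGroup.mk [(a, false)] = (FreeGroup.mk [(a, true)])⁻¹
        rw [FreeGroup.inv_mk]
        rfl
    rw [h1, h2, ih, List.map_cons, List.prod_cons]

private lemma le_foldr_max {a : ℕ} {l : List ℕ} (h : a ∈ l) : a ≤ l.foldr max 0 := by
  induction l with
  | nil => simp at h
  | cons b t ih =>
    rcases List.mem_cons.mp h with h | h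
    · subst h; exact le_max_left _ _
    · exact le_trans (ih h) (le_max_right _ _)

private lemma verbal_not_fg (W : Set (FreeGroup ℕ)) (w : FreeGroup ℕ) (hwW : w ∈ W)
    (hw1 : w ≠ 1) : ¬ (verbalSubgroupOfWords W).FG := by
  rintro ⟨S, hS⟩
  classical
  set N : ℕ := S.sup (fun g => (g.toWord.map Prod.fst).foldr max 0) with hN
  -- retraction killing letters > N
  set r : FreeGroup ℕ →* FreeGroup ℕ :=
    FreeGroup.lift (fun i => if i ≤ N then FreeGroup.of i else 1) with hr
  -- shift homomorphism
  set ψ : FreeGroup ℕ →* FreeGroup ℕ := FreeGroup.lift (fun i => FreeGroup.of (i + N + 1)) with hψ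
  -- r fixes every element of S
  have hfix : ∀ s ∈ (S : Set (FreeGroup ℕ)), r s = s := by
    intro s hs
    have hbound : ∀ p ∈ s.toWord, p.1 ≤ N := by
      intro p hp
      have h1 : p.1 ≤ (s.toWord.map Prod.fst).foldr max 0 :=
        le_foldr_max (List.mem_map.mpr ⟨p, hp, rfl⟩)
      exact le_trans h1 (Finset.le_sup (f := fun g => (g.toWord.map Prod.fst).foldr max 0) hs)
    have key : r (FreeGroup.mk s.toWord) = FreeGroup.mk s.toWord := by
      rw [hr, FreeGroup.lift_mk]
      conv_rhs => rw [mk_eq_prod]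
      congr 1
      apply List.map_congr_left
      intro p hp
      rw [if_pos (hbound p hp)]
    rwa [FreeGroup.mk_toWord] at key
  -- hence r fixes every element of the verbal subgroup
  have hHfix : ∀ x ∈ verbalSubgroupOfWords W, r x = x := by
    intro x hx
    have : x ∈ Subgroup.closure (S : Set (FreeGroup ℕ)) := hS ▸ hx
    exact MonoidHom.eqOn_closure (g := MonoidHom.id _) hfix this
  -- ψ w is in the verbal subgroup
  have hmem : ψ w ∈ verbalSubgroupOfWords W :=
    Subgroup.subset_closure ⟨w, hwW, ψ, rfl⟩
  -- r ∘ ψ is the trivial homomorphism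
  have hrψ : r.comp ψ = 1 := by
    apply FreeGroup.ext_hom
    intro i
    simp only [MonoidHom.comp_apply, hψ, FreeGroup.lift_apply_of, hr, MonoidHom.one_apply]
    rw [if_neg (by omega)]
  have h1 : ψ w = 1 := by
    have := hHfix (ψ w) hmem
    rw [← this]
    have : r (ψ w) = (r.comp ψ) w := rfl
    rw [this, hrψ]
    rfl
  -- ψ has a left inverse, so ψ w = 1 forces w = 1
  set ρ : FreeGroup ℕ →* FreeGroup ℕ := FreeGroup.lift (fun j => FreeGroup.of (j - (N + 1)))
  have hρψ : ρ.comp ψ = MonoidHom.id _ := by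
    apply FreeGroup.ext_hom
    intro i
    simp only [MonoidHom.comp_apply, hψ, FreeGroup.lift_apply_of, MonoidHom.id_apply]
    rw [FreeGroup.lift_apply_of]
    congr 1
    omega
  have : w = 1 := by
    have h2 : ρ (ψ w) = w := by
      have : ρ (ψ w) = (ρ.comp ψ) w := rfl
      rw [this, hρψ, MonoidHom.id_apply]
    rw [h1, map_one] at h2
    exact h2.symm
  exact hw1 this

theorem stmt17 (W : Set (FreeGroup ℕ)) (hW : ∃ w ∈ W, w ≠ 1) :
    Nonempty (verbalSubgroupOfWords W ≃* FreeGroup ℕ) := by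
  obtain ⟨w, hwW, hw1⟩ := hW
  set H := verbalSubgroupOfWords W with hH
  haveI : IsFreeGroup H := inferInstance
  haveI : Countable (FreeGroup ℕ) := FreeGroup.toWord_injective.countable
  -- Generators of H are countable
  have hofinj : Function.Injective (IsFreeGroup.of : IsFreeGroup.Generators ↥H → ↥H) :=
    Function.Injective.comp (IsFreeGroup.mulEquiv ↥H).injective FreeGroup.of_injective
  haveI : Countable (IsFreeGroup.Generators ↥H) := hofinj.countable
  -- Generators of H are infinite
  haveI : Infinite (IsFreeGroup.Generators ↥H) := by
    by_contra hfin
    rw [not_infinite_iff_finite] at hfin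
    -- then H would be finitely generated
    haveI : Group.FG (FreeGroup (IsFreeGroup.Generators ↥H)) :=
      Group.fg_iff.mpr ⟨Set.range FreeGroup.of, FreeGroup.closure_range_of _, Set.finite_range _⟩
    have hfg : Group.FG ↥H :=
      Group.fg_of_surjective (f := (IsFreeGroup.toFreeGroup (G := ↥H)).symm.toMonoidHom)
        (IsFreeGroup.toFreeGroup (G := ↥H)).symm.surjective
    exact verbal_not_fg W w hwW hw1 ((Group.fg_iff_subgroup_fg H).mp hfg)
  obtain ⟨d⟩ := nonempty_denumerable (IsFreeGroup.Generators ↥H)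
  exact ⟨(IsFreeGroup.toFreeGroup (G := ↥H)).trans (FreeGroup.freeGroupCongr (Denumerable.eqv _))⟩
end

section
/- Let ℓ ≥ 2, and let 𝒮_ℓ be the class of all solvable groups of solvability length at most ℓ, i.e., all groups G whose ℓ-th derived subgroup is trivial (derivedSeries G ℓ = ⊥). Then 𝒮_ℓ has instances of nontrivial dominions: there exist a group G ∈ 𝒮_ℓ and a subgroup H of G with H strictly contained in dom_G^{𝒮_ℓ}(H). -/
namespace Dom

open scoped commutatorElement

abbrev Qg : Type := ZMod 2 × ZMod 2 × ZMod 2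
abbrev Vg : Type := Qg → ZMod 2

def shiftEquiv (q : Qg) : Vg ≃+ Vg where
  toFun f := fun i => f (i + q)
  invFun f := fun i => f (i - q)
  left_inv f := by funext i; simp
  right_inv f := by funext i; simp
  map_add' f g := rfl

def phi : Multiplicative Qg →* MulAut (Multiplicative Vg) where
  toFun q := AddEquiv.toMultiplicative (shiftEquiv q.toAdd)
  map_one' := by
    apply MulEquiv.ext; intro f
    show Multiplicative.ofAdd (fun i => (f.toAdd) (i + 0)) = f
    simp
  map_mul' q r := by
    apply MulEquiv.ext; intro f
    show Multiplicative.ofAdd (fun i => (f.toAdd) (i + (q.toAdd + r.toAdd))) =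
      Multiplicative.ofAdd (fun i => (Multiplicative.ofAdd fun j => f.toAdd (j + r.toAdd)).toAdd (i + q.toAdd))
    simp [add_assoc]

abbrev Gm : Type := Multiplicative Vg ⋊[phi] Multiplicative Qg

def qc : Qg := (1, 0, 0)
def qv : Qg := (0, 1, 0)
def qw : Qg := (0, 0, 1)
def d0 : Vg := fun i => if i = 0 then 1 else 0

def gc : Gm := ⟨1, Multiplicative.ofAdd qc⟩
def gu : Gm := ⟨1, Multiplicative.ofAdd qv⟩
def gw : Gm := ⟨1, Multiplicative.ofAdd qw⟩
def gy : Gm := ⟨Multiplicative.ofAdd d0, 1⟩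

def xp : Gm := ⁅gw, gy⁆
def zp : Gm := ⁅gc, xp⁆
def xx : Gm := gu * xp * gu⁻¹
def zz : Gm := ⁅gc, xx⁆

def H2 : Subgroup Gm := Subgroup.closure {xp, xx, zp}

def Wspan : AddSubgroup Vg :=
  AddSubgroup.closure {Multiplicative.toAdd xp.left, Multiplicative.toAdd xx.left,
    Multiplicative.toAdd zp.left}

def HH : Subgroup Gm where
  carrier := {g | g.right = 1 ∧ Multiplicative.toAdd g.left ∈ Wspan}
  one_mem' := by
    constructor
    · rfl
    · show Multiplicative.toAdd (1 : Multiplicative Vg) ∈ Wspan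
      simp [AddSubgroup.zero_mem]
  mul_mem' := by
    rintro a b ⟨ha1, ha2⟩ ⟨hb1, hb2⟩
    constructor
    · show a.right * b.right = 1
      rw [ha1, hb1, mul_one]
    · show Multiplicative.toAdd (a * b).left ∈ Wspan
      have : (a * b).left = a.left * phi a.right b.left := rfl
      rw [this, ha1, map_one]
      show Multiplicative.toAdd (a.left * b.left) ∈ Wspan
      rw [toAdd_mul]
      exact Wspan.add_mem ha2 hb2
  inv_mem' := by
    rintro a ⟨ha1, ha2⟩
    constructor
    · show a.right⁻¹ = 1
      rw [ha1]; simp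
    · show Multiplicative.toAdd (a⁻¹).left ∈ Wspan
      have : (a⁻¹).left = phi a.right⁻¹ a.left⁻¹ := rfl
      rw [this, ha1]
      simp only [inv_one, map_one]
      show Multiplicative.toAdd (a.left⁻¹) ∈ Wspan
      rw [toAdd_inv]
      exact Wspan.neg_mem ha2

lemma H2_le_HH : H2 ≤ HH := by
  rw [H2, Subgroup.closure_le]
  rintro g (rfl | rfl | rfl)
  · exact ⟨by decide, AddSubgroup.subset_closure (by simp)⟩
  · exact ⟨by decide, AddSubgroup.subset_closure (by simp)⟩
  · exact ⟨by decide, AddSubgroup.subset_closure (by simp)⟩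

lemma zz_not_mem_H2 : zz ∉ H2 := by
  intro hmem
  obtain ⟨-, h2⟩ := H2_le_HH hmem
  have hker : Wspan ≤ (Pi.evalAddMonoidHom (fun _ : Qg => ZMod 2) ((1, 1, 0) : Qg)).ker := by
    rw [Wspan, AddSubgroup.closure_le]
    rintro v (rfl | rfl | rfl) <;> simp only [SetLike.mem_coe, AddMonoidHom.mem_ker] <;> decide
  have := hker h2
  rw [AddMonoidHom.mem_ker] at this
  have hne : (Pi.evalAddMonoidHom (fun _ : Qg => ZMod 2) ((1, 1, 0) : Qg))
      (Multiplicative.toAdd zz.left) = 1 := by decide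
  rw [this] at hne
  exact one_ne_zero hne.symm

lemma vg_inv (v : Multiplicative Vg) : v⁻¹ = v := by
  have : ∀ f : Vg, -f = f := by
    intro f; funext i
    exact (by decide : ∀ z : ZMod 2, -z = z) _
  show Multiplicative.ofAdd (-(Multiplicative.toAdd v)) = v
  rw [this]; rfl

lemma qg_sq (q : Multiplicative Qg) : q * q = 1 := by
  show Multiplicative.ofAdd (Multiplicative.toAdd q + Multiplicative.toAdd q) = 1
  rw [(by decide : ∀ x : Qg, x + x = 0) _]; rfl

lemma sq_mem_derived (g : Gm) : g * g ∈ derivedSeries Gm 1 := by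
  have key : g * g = ⁅(⟨1, g.right⟩ : Gm), (⟨g.left, 1⟩ : Gm)⁆ := by
    have h1 : (⁅(⟨1, g.right⟩ : Gm), (⟨g.left, 1⟩ : Gm)⁆ : Gm) =
        ⟨phi g.right g.left * g.left⁻¹, g.right * 1 * g.right⁻¹ * 1⁻¹⟩ := by
      show (⟨1, g.right⟩ : Gm) * ⟨g.left, 1⟩ * (⟨1, g.right⟩ : Gm)⁻¹ * (⟨g.left, 1⟩ : Gm)⁻¹ = _
      ext <;> simp
    rw [h1]
    ext : 1
    · show g.left * phi g.right g.left = phi g.right g.left * g.left⁻¹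
      rw [vg_inv, mul_comm]
    · show g.right * g.right = g.right * 1 * g.right⁻¹ * 1⁻¹
      rw [qg_sq]; simp
  rw [key, derivedSeries_one, commutator_def]
  exact Subgroup.commutator_mem_commutator (Subgroup.mem_top _) (Subgroup.mem_top _)

lemma gm_metabelian : derivedSeries Gm 2 = ⊥ := by
  have hD1 : derivedSeries Gm 1 ≤ (SemidirectProduct.rightHom : Gm →* Multiplicative Qg).ker := by
    rw [derivedSeries_one, commutator_def, Subgroup.commutator_le]
    intro a _ b _
    rw [MonoidHom.mem_ker, map_commutatorElement]
    exact commutatorElement_eq_one_iff_mul_comm.mpr (mul_comm _ _)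
  have : derivedSeries Gm 2 ≤ ⊥ := by
    rw [derivedSeries_succ, Subgroup.commutator_le]
    intro a ha b hb
    have ha' : a.right = 1 := hD1 ha
    have hb' : b.right = 1 := hD1 hb
    rw [Subgroup.mem_bot, commutatorElement_eq_one_iff_mul_comm]
    ext : 1
    · show a.left * phi a.right b.left = b.left * phi b.right a.left
      rw [ha', hb', map_one]
      show a.left * b.left = b.left * a.left
      exact mul_comm _ _
    · show a.right * b.right = b.right * a.right
      exact mul_comm _ _
  exact le_bot_iff.mp this



variable (P : Type) [Group P]

def sw : MulAut (P × P) := (MulEquiv.prodComm : P × P ≃* P × P)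

lemma sw_apply (pp : P × P) : sw P pp = (pp.2, pp.1) := rfl

lemma sw_sq : sw P * sw P = 1 := by
  apply MulEquiv.ext; intro x
  show sw P (sw P x) = x
  rw [sw_apply, sw_apply]

def phiW : Multiplicative (ZMod 2) →* MulAut (P × P) where
  toFun s := (sw P) ^ (Multiplicative.toAdd s).val
  map_one' := by norm_num
  map_mul' a b := by
    have hta : Multiplicative.toAdd (a * b) = Multiplicative.toAdd a + Multiplicative.toAdd b := rfl
    rcases (by decide : ∀ x y : ZMod 2, (x + y).val = x.val + y.val ∨ (x + y).val + 2 = x.val + y.val)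
      (Multiplicative.toAdd a) (Multiplicative.toAdd b) with h | h
    · show (sw P) ^ (Multiplicative.toAdd (a*b)).val = _
      rw [hta, h, pow_add]
    · show (sw P) ^ (Multiplicative.toAdd (a*b)).val = _
      rw [hta, ← pow_add, ← h, pow_add, pow_two, sw_sq, mul_one]

abbrev WT : Type := (P × P) ⋊[phiW P] Multiplicative (ZMod 2)

def sgg : Multiplicative (ZMod 2) := Multiplicative.ofAdd 1

def sgw : WT P := ⟨(1, 1), sgg⟩

lemma phiW_s_apply (pp : P × P) : phiW P sgg pp = (pp.2, pp.1) := by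
  show ((sw P) ^ (Multiplicative.toAdd (Multiplicative.ofAdd (1 : ZMod 2))).val) pp = _
  have : (Multiplicative.toAdd (Multiplicative.ofAdd (1 : ZMod 2))).val = 1 := rfl
  rw [this, pow_one, sw_apply]

lemma phiW_one_apply (pp : P × P) : phiW P 1 pp = pp := by
  rw [map_one]; rfl

lemma mk_mul (n n' : P × P) (g g' : Multiplicative (ZMod 2)) :
    (⟨n, g⟩ * ⟨n', g'⟩ : WT P) = ⟨n * phiW P g n', g * g'⟩ := rfl

lemma mk_inv (n : P × P) (g : Multiplicative (ZMod 2)) :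
    (⟨n, g⟩ : WT P)⁻¹ = ⟨phiW P g⁻¹ n⁻¹, g⁻¹⟩ := rfl

lemma sgg_inv : sgg⁻¹ = sgg := by decide
lemma sgg_sq : sgg * sgg = 1 := by decide

lemma antidiag_eq_commutator (x : P) :
    (⟨(x, x⁻¹), 1⟩ : WT P) = ⁅(⟨(x, 1), 1⟩ : WT P), sgw P⁆ := by
  have e1 : (⟨(x, 1), 1⟩ : WT P) * sgw P = ⟨(x, 1), sgg⟩ := by
    rw [sgw, mk_mul, phiW_one_apply, one_mul]
    congr 1
    simp
  have e2 : (⟨(x, 1), 1⟩ : WT P)⁻¹ = ⟨(x⁻¹, 1), 1⟩ := by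
    rw [mk_inv, inv_one, phiW_one_apply]
    congr 1
    simp
  have e3 : (sgw P)⁻¹ = sgw P := by
    rw [sgw, mk_inv, sgg_inv, phiW_s_apply]
    congr 1
    simp
  have e4 : (⟨(x, 1), sgg⟩ : WT P) * ⟨(x⁻¹, 1), 1⟩ = ⟨(x, x⁻¹), sgg⟩ := by
    rw [mk_mul, phiW_s_apply]
    congr 1
    show (x, (1 : P)) * ((1 : P), x⁻¹) = (x, x⁻¹)
    simp
  have e5 : (⟨(x, x⁻¹), sgg⟩ : WT P) * sgw P = ⟨(x, x⁻¹), 1⟩ := by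
    rw [sgw, mk_mul, phiW_s_apply, sgg_sq]
    congr 1
    simp
  show _ = (⟨(x, 1), 1⟩ : WT P) * sgw P * (⟨(x, 1), 1⟩ : WT P)⁻¹ * (sgw P)⁻¹
  rw [e1, e2, e4, e3, e5]


lemma mem_dS_map {A B : Type*} [Group A] [Group B] (f : A →* B) {n : ℕ} {x : A}
    (hx : x ∈ derivedSeries A n) : f x ∈ derivedSeries B n :=
  map_derivedSeries_le_derivedSeries f n (Subgroup.mem_map_of_mem f hx)

def inl2 : P →* WT P := SemidirectProduct.inl.comp (MonoidHom.inl P P)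
def inr2 : P →* WT P := SemidirectProduct.inl.comp (MonoidHom.inr P P)

lemma commutator_top_mem {A : Type} [Group A] (a b : A) :
    ⁅a, b⁆ ∈ derivedSeries A 1 := by
  rw [derivedSeries_one, commutator_def]
  exact Subgroup.commutator_mem_commutator (Subgroup.mem_top _) (Subgroup.mem_top _)

lemma diag_mem_derived (hsq : ∀ p : P, p * p ∈ derivedSeries P 1) (x : P) :
    (⟨(x, x), 1⟩ : WT P) ∈ derivedSeries (WT P) 1 := by
  have hfac : (⟨(x, x), 1⟩ : WT P) = ⟨(x, x⁻¹), 1⟩ * ⟨(1, x * x), 1⟩ := by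
    rw [mk_mul, phiW_one_apply]
    congr 1
    · show (x, x) = (x, x⁻¹) * (1, x * x)
      show (x, x) = (x * 1, x⁻¹ * (x * x))
      simp [← mul_assoc]
  rw [hfac]
  apply mul_mem
  · rw [antidiag_eq_commutator]
    exact commutator_top_mem _ _
  · exact mem_dS_map (inr2 P) (hsq x)

lemma sq_mem_WT (hsq : ∀ p : P, p * p ∈ derivedSeries P 1) (g : WT P) :
    g * g ∈ derivedSeries (WT P) 1 := by
  obtain ⟨⟨a, b⟩, s⟩ := g
  rcases (by decide : ∀ z : Multiplicative (ZMod 2), z = 1 ∨ z = sgg) s with rfl | rfl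
  · have h1 : (⟨(a, b), 1⟩ : WT P) * ⟨(a, b), 1⟩ = inl2 P (a * a) * inr2 P (b * b) := by
      rw [mk_mul, phiW_one_apply]
      show (⟨(a * a, b * b), 1 * 1⟩ : WT P) = _
      have : inl2 P (a * a) * inr2 P (b * b) =
          (⟨(a * a, 1), 1⟩ : WT P) * ⟨(1, b * b), 1⟩ := rfl
      rw [this, mk_mul, phiW_one_apply]
      congr 1
      · show (a * a, b * b) = (a * a, 1) * (1, b * b)
        show (a * a, b * b) = (a * a * 1, 1 * (b * b))
        simp
    rw [h1]
    exact mul_mem (mem_dS_map (inl2 P) (hsq a)) (mem_dS_map (inr2 P) (hsq b))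
  · have h1 : (⟨(a, b), sgg⟩ : WT P) * ⟨(a, b), sgg⟩ = ⟨(a * b, b * a), 1⟩ := by
      rw [mk_mul, phiW_s_apply, sgg_sq]
      rfl
    have h2 : (⟨(a * b, b * a), 1⟩ : WT P) =
        ⟨(a * b, (a * b)⁻¹), 1⟩ * inr2 P ((a * b) * (b * a)) := by
      show _ = (⟨(a * b, (a * b)⁻¹), 1⟩ : WT P) * ⟨(1, (a * b) * (b * a)), 1⟩
      rw [mk_mul, phiW_one_apply]
      congr 1
      · show (a * b, b * a) = (a * b, (a * b)⁻¹) * (1, a * b * (b * a))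
        show (a * b, b * a) = (a * b * 1, (a * b)⁻¹ * (a * b * (b * a)))
        simp [← mul_assoc]
    rw [h1, h2]
    apply mul_mem
    · rw [antidiag_eq_commutator]
      exact commutator_top_mem _ _
    · apply mem_dS_map (inr2 P)
      have : (a * b) * (b * a) = a * (b * b) * a⁻¹ * (a * a) := by group
      rw [this]
      exact mul_mem ((derivedSeries_normal P 1).conj_mem _ (hsq b) a) (hsq a)

lemma derived_WT_le_base :
    derivedSeries (WT P) 1 ≤ (SemidirectProduct.rightHom :
      WT P →* Multiplicative (ZMod 2)).ker := by
  rw [derivedSeries_one, commutator_def, Subgroup.commutator_le]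
  intro a _ b _
  rw [MonoidHom.mem_ker, map_commutatorElement]
  exact commutatorElement_eq_one_iff_mul_comm.mpr (mul_comm _ _)

lemma dS_WT_le_map (n : ℕ) :
    derivedSeries (WT P) (n + 1) ≤
      Subgroup.map SemidirectProduct.inl (derivedSeries (P × P) n) := by
  induction n with
  | zero =>
    intro x hx
    have hx' := derived_WT_le_base P hx
    rw [← SemidirectProduct.range_inl_eq_ker_rightHom, MonoidHom.mem_range] at hx'
    obtain ⟨y, rfl⟩ := hx'
    exact Subgroup.mem_map_of_mem _ (Subgroup.mem_top _)
  | succ n ih =>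
    calc derivedSeries (WT P) (n + 2)
        = ⁅derivedSeries (WT P) (n + 1), derivedSeries (WT P) (n + 1)⁆ :=
          derivedSeries_succ _ _
      _ ≤ ⁅Subgroup.map SemidirectProduct.inl (derivedSeries (P × P) n),
            Subgroup.map SemidirectProduct.inl (derivedSeries (P × P) n)⁆ :=
          Subgroup.commutator_mono ih ih
      _ = Subgroup.map SemidirectProduct.inl (derivedSeries (P × P) (n + 1)) := by
          rw [derivedSeries_succ, Subgroup.map_commutator]

lemma dS_prod_le {A B : Type} [Group A] [Group B] (n : ℕ) :
    derivedSeries (A × B) n ≤ (derivedSeries A n).prod (derivedSeries B n) := by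
  induction n with
  | zero => simp
  | succ n ih =>
    rw [derivedSeries_succ]
    calc ⁅derivedSeries (A × B) n, derivedSeries (A × B) n⁆
        ≤ ⁅(derivedSeries A n).prod (derivedSeries B n),
            (derivedSeries A n).prod (derivedSeries B n)⁆ :=
          Subgroup.commutator_mono ih ih
      _ ≤ (derivedSeries A (n + 1)).prod (derivedSeries B (n + 1)) := by
          rw [Subgroup.commutator_le]
          rintro ⟨a, b⟩ hab ⟨c, d⟩ hcd
          rw [Subgroup.mem_prod] at hab hcd
          have : (⁅(a, b), (c, d)⁆ : A × B) = (⁅a, c⁆, ⁅b, d⁆) := rfl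
          rw [this, derivedSeries_succ, derivedSeries_succ, Subgroup.mem_prod]
          exact ⟨Subgroup.commutator_mem_commutator hab.1 hcd.1,
            Subgroup.commutator_mem_commutator hab.2 hcd.2⟩

lemma WT_solvable (k : ℕ) (h : derivedSeries P k = ⊥) :
    derivedSeries (WT P) (k + 1) = ⊥ := by
  apply le_bot_iff.mp
  calc derivedSeries (WT P) (k + 1)
      ≤ Subgroup.map SemidirectProduct.inl (derivedSeries (P × P) k) := dS_WT_le_map P k
    _ ≤ Subgroup.map SemidirectProduct.inl ((derivedSeries P k).prod (derivedSeries P k)) :=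
        Subgroup.map_mono (dS_prod_le k)
    _ ≤ ⊥ := by rw [h, Subgroup.bot_prod_bot]; simp

def stepHom : P →* WT P :=
  SemidirectProduct.inl.comp ((MonoidHom.id P).prod (MonoidHom.id P))

lemma stepHom_apply (x : P) : stepHom P x = ⟨(x, x), 1⟩ := rfl

lemma stepHom_injective : Function.Injective (stepHom P) := by
  intro a b h
  have := congrArg (fun g : WT P => g.left.1) h
  exact this

lemma map_stepHom_dS (hsq : ∀ p : P, p * p ∈ derivedSeries P 1) (n : ℕ) :
    Subgroup.map (stepHom P) (derivedSeries P n) ≤ derivedSeries (WT P) (n + 1) := by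
  induction n with
  | zero =>
    rintro x ⟨y, -, rfl⟩
    rw [stepHom_apply]
    exact diag_mem_derived P hsq y
  | succ n ih =>
    rw [derivedSeries_succ, Subgroup.map_commutator, derivedSeries_succ]
    exact Subgroup.commutator_mono ih ih


def XG : ℕ → GroupT.{0}
  | 0 => ⟨Gm⟩
  | n + 1 => ⟨WT (XG n).carrier⟩

lemma XG_sq : ∀ n, ∀ g : (XG n).carrier, g * g ∈ derivedSeries (XG n).carrier 1
  | 0 => sq_mem_derived
  | n + 1 => sq_mem_WT (XG n).carrier (XG_sq n)

lemma XG_solvable : ∀ n, derivedSeries (XG n).carrier (n + 2) = ⊥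
  | 0 => gm_metabelian
  | n + 1 => WT_solvable (XG n).carrier (n + 2) (XG_solvable n)

def iotaX : ∀ n, Gm →* (XG n).carrier
  | 0 => MonoidHom.id Gm
  | n + 1 => (stepHom (XG n).carrier).comp (iotaX n)

lemma iotaX_injective : ∀ n, Function.Injective (iotaX n)
  | 0 => fun _ _ h => h
  | n + 1 => (stepHom_injective (XG n).carrier).comp (iotaX_injective n)

lemma iotaX_mem_dS : ∀ n, ∀ g : Gm, iotaX n g ∈ derivedSeries (XG n).carrier n
  | 0, g => by
      rw [derivedSeries_zero]
      exact Subgroup.mem_top _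
  | n + 1, g =>
      map_stepHom_dS (XG n).carrier (XG_sq n) n
        (Subgroup.mem_map_of_mem _ (iotaX_mem_dS n g))

lemma lemA {K : Type*} [Group K] (T : Subgroup K) (hnorm : T.Normal)
    (hab : ∀ a ∈ T, ∀ b ∈ T, a * b = b * a)
    {A A' U N' Z' : K} (hN' : N' ∈ T)
    (hAU : ⁅A, U⁆ ∈ T) (hA'U : ⁅A', U⁆ ∈ T)
    (h1 : A * N' * A⁻¹ = Z' * N') (h2 : A' * N' * A'⁻¹ = Z' * N') :
    A * (U * N' * U⁻¹) * A⁻¹ = A' * (U * N' * U⁻¹) * A'⁻¹ := by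
  have hZ' : Z' ∈ T := by
    have hz : Z' = A * N' * A⁻¹ * N'⁻¹ := by rw [h1]; group
    rw [hz]
    exact mul_mem (hnorm.conj_mem N' hN' A) (inv_mem hN')
  have key : ∀ B : K, ⁅B, U⁆ ∈ T → B * N' * B⁻¹ = Z' * N' →
      B * (U * N' * U⁻¹) * B⁻¹ = U * (Z' * N') * U⁻¹ := by
    intro B hBU hB
    have hBU' : B * U = ⁅B, U⁆ * (U * B) := by group
    have hmem : U * (Z' * N') * U⁻¹ ∈ T :=
      hnorm.conj_mem _ (mul_mem hZ' hN') U
    calc B * (U * N' * U⁻¹) * B⁻¹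
        = (B * U) * N' * ((B * U)⁻¹) := by group
      _ = (⁅B, U⁆ * (U * B)) * N' * ((⁅B, U⁆ * (U * B))⁻¹) := by rw [← hBU']
      _ = ⁅B, U⁆ * (U * (B * N' * B⁻¹) * U⁻¹) * ⁅B, U⁆⁻¹ := by group
      _ = ⁅B, U⁆ * (U * (Z' * N') * U⁻¹) * ⁅B, U⁆⁻¹ := by rw [hB]
      _ = (U * (Z' * N') * U⁻¹) * ⁅B, U⁆ * ⁅B, U⁆⁻¹ := by
          rw [hab _ hBU _ hmem]
      _ = U * (Z' * N') * U⁻¹ := by group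
  rw [key A hAU h1, key A' hA'U h2]

lemma core_forcing {K : Type*} [Group K] (m : ℕ) (hK : derivedSeries K (m + 2) = ⊥)
    (F G' : Gm →* K)
    (hF : ∀ w : Gm, F w ∈ derivedSeries K m) (hG : ∀ w : Gm, G' w ∈ derivedSeries K m)
    (hxp : F xp = G' xp) (hxx : F xx = G' xx) (hzp : F zp = G' zp) :
    F zz = G' zz := by
  have habT : ∀ a ∈ derivedSeries K (m + 1), ∀ b ∈ derivedSeries K (m + 1), a * b = b * a := by
    intro a ha b hb
    have hc : ⁅a, b⁆ ∈ derivedSeries K (m + 2) := by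
      rw [derivedSeries_succ]
      exact Subgroup.commutator_mem_commutator ha hb
    rw [hK, Subgroup.mem_bot] at hc
    exact commutatorElement_eq_one_iff_mul_comm.mp hc
  have hN'mem : F xp ∈ derivedSeries K (m + 1) := by
    rw [xp, map_commutatorElement, derivedSeries_succ]
    exact Subgroup.commutator_mem_commutator (hF gw) (hF gy)
  have hAU : ⁅F gc, F gu⁆ ∈ derivedSeries K (m + 1) := by
    rw [derivedSeries_succ]
    exact Subgroup.commutator_mem_commutator (hF gc) (hF gu)
  have hA'U : ⁅G' gc, F gu⁆ ∈ derivedSeries K (m + 1) := by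
    rw [derivedSeries_succ]
    exact Subgroup.commutator_mem_commutator (hG gc) (hF gu)
  have hrel : gc * xp * gc⁻¹ = zp * xp := by
    rw [zp, commutatorElement_def]
    group
  have r1 : F gc * F xp * (F gc)⁻¹ = F zp * F xp := by
    have := congrArg F hrel
    simpa [map_mul, map_inv] using this
  have r2 : G' gc * F xp * (G' gc)⁻¹ = F zp * F xp := by
    have := congrArg G' hrel
    rw [hxp, hzp]
    simpa [map_mul, map_inv] using this
  have main := lemA (derivedSeries K (m + 1)) (derivedSeries_normal _ _) habT
    hN'mem hAU hA'U r1 r2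
  have hFxx : F xx = F gu * F xp * (F gu)⁻¹ := by
    rw [xx]
    simp [map_mul, map_inv]
  rw [zz, map_commutatorElement, map_commutatorElement,
    commutatorElement_def, commutatorElement_def, ← hxx, hFxx]
  rw [main]

end Dom

theorem stmt19 (ℓ : ℕ) (hℓ : 2 ≤ ℓ) :
    HasNontrivialDominions (fun G : GroupT.{u} => derivedSeries G.carrier ℓ = ⊥) := by
  obtain ⟨m, rfl⟩ : ∃ m, m + 2 = ℓ := ⟨ℓ - 2, Nat.sub_add_cancel hℓ⟩
  classical
  let e : (Dom.XG m).carrier ≃* ULift.{u} (Dom.XG m).carrier := MulEquiv.ulift.symm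
  let iota' : Dom.Gm →* ULift.{u} (Dom.XG m).carrier := e.toMonoidHom.comp (Dom.iotaX m)
  have hiotainj : Function.Injective iota' :=
    e.injective.comp (Dom.iotaX_injective m)
  have hiotamem : ∀ w : Dom.Gm, iota' w ∈ derivedSeries (ULift.{u} (Dom.XG m).carrier) m := by
    intro w
    exact Dom.mem_dS_map e.toMonoidHom (Dom.iotaX_mem_dS m w)
  refine ⟨⟨ULift.{u} (Dom.XG m).carrier⟩, Subgroup.map iota' Dom.H2, ?_, ?_⟩
  · show derivedSeries (ULift.{u} (Dom.XG m).carrier) (m + 2) = ⊥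
    rw [← map_derivedSeries_eq (f := e.toMonoidHom) e.surjective (m + 2), Dom.XG_solvable m]
    simp
  · rw [Set.ssubset_iff_of_subset]
    · refine ⟨iota' Dom.zz, ?_, ?_⟩
      · -- in the dominion
        intro K hK f g hagree
        have hxpH : iota' Dom.xp ∈ Subgroup.map iota' Dom.H2 :=
          Subgroup.mem_map_of_mem _ (Subgroup.subset_closure (by simp [Set.mem_insert_iff]))
        have hxxH : iota' Dom.xx ∈ Subgroup.map iota' Dom.H2 :=
          Subgroup.mem_map_of_mem _ (Subgroup.subset_closure (by simp [Set.mem_insert_iff]))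
        have hzpH : iota' Dom.zp ∈ Subgroup.map iota' Dom.H2 :=
          Subgroup.mem_map_of_mem _ (Subgroup.subset_closure (by simp [Set.mem_insert_iff]))
        exact Dom.core_forcing m hK (f.comp iota') (g.comp iota')
          (fun w => Dom.mem_dS_map f (hiotamem w))
          (fun w => Dom.mem_dS_map g (hiotamem w))
          (hagree _ hxpH) (hagree _ hxxH) (hagree _ hzpH)
      · -- not in H
        intro hmem
        obtain ⟨h, hh, heq⟩ := hmem
        exact Dom.zz_not_mem_H2 (hiotainj heq ▸ hh)
    · -- H ⊆ dominion
      intro a ha K hK f g hagree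
      exact hagree a ha
end
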